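/- In any interval [u, v] of NC_W(γ), the reflections appearing as coordinates of the label of a single maximal chain under the natural edge labeling are pairwise distinct. -/

import Mathlib

open scoped RealInnerProductSpace
open Module

noncomputable section

variable {V : Type*} [NormedAddCommGroup V] [InnerProductSpace ℝ V]

/-- `g` acts as the orthogonal reflection in the hyperplane orthogonal to `α`. -/
def reflFormula (α : V) (g : V ≃ₗᵢ[ℝ] V) : Prop :=
  ∀ v, g v = v - (2 * ⟪α, v⟫ / ⟪α, α⟫) • α

/-- `g` is an orthogonal reflection. -/
def IsReflection (g : V ≃ₗᵢ[ℝ] V) : Prop :=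
  ∃ α : V, α ≠ 0 ∧ reflFormula α g

/-- A finite real reflection group: a finite subgroup of the orthogonal group
generated by its reflections. -/
def IsReflectionGroup (W : Subgroup (V ≃ₗᵢ[ℝ] V)) : Prop :=
  Finite W ∧ Subgroup.closure {g | g ∈ W ∧ IsReflection g} = W

/-- Reflection length: the least `k` such that `w` is a product of `k` reflections. -/
def refLen (W : Subgroup (V ≃ₗᵢ[ℝ] V)) (w : W) : ℕ :=
  sInf {k | ∃ l : List W, l.length = k ∧ (∀ t ∈ l, IsReflection (t : W).1) ∧ l.prod = w}

/-- The absolute order on `W`. -/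
def absLe (W : Subgroup (V ≃ₗᵢ[ℝ] V)) (u v : W) : Prop :=
  refLen W u + refLen W (u⁻¹ * v) = refLen W v

/-- Covering relation of the absolute order. -/
def covers (W : Subgroup (V ≃ₗᵢ[ℝ] V)) (u v : W) : Prop :=
  absLe W u v ∧ u ≠ v ∧ ∀ z, absLe W u z → absLe W z v → z = u ∨ z = v

/-- The fixed subspace of an isometry. -/
def fixedSpace (g : V ≃ₗᵢ[ℝ] V) : Submodule ℝ V where
  carrier := {v | g v = v}
  add_mem' := by
    intro a b ha hb
    simp only [Set.mem_setOf_eq, map_add] at *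
    rw [ha, hb]
  zero_mem' := by simp
  smul_mem' := by
    intro c a ha
    simp only [Set.mem_setOf_eq, map_smul] at *
    rw [ha]

/-- A root system for the reflection group `W`. -/
def IsRootSystemFor (W : Subgroup (V ≃ₗᵢ[ℝ] V)) (Φ : Set V) : Prop :=
  Φ.Finite ∧ (∀ α ∈ Φ, α ≠ 0) ∧ (∀ α ∈ Φ, -α ∈ Φ) ∧
  (∀ α ∈ Φ, ∀ c : ℝ, c • α ∈ Φ → c = 1 ∨ c = -1) ∧
  (∀ α ∈ Φ, ∃ t ∈ W, reflFormula α t) ∧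
  (∀ t ∈ W, IsReflection t → ∃ α ∈ Φ, reflFormula α t) ∧
  (∀ g ∈ W, ∀ α ∈ Φ, g α ∈ Φ)

/-- A simple system for `Φ`: roots `σ 1, …, σ ℓ` which are linearly independent and
such that every root is a nonnegative or nonpositive combination of them. -/
def IsSimpleSystem (Φ : Set V) {ℓ : ℕ} (σ : Fin ℓ → V) : Prop :=
  (∀ i, σ i ∈ Φ) ∧ LinearIndependent ℝ σ ∧
  ∀ α ∈ Φ, (∃ c : Fin ℓ → ℝ, (∀ i, 0 ≤ c i) ∧ α = ∑ i, c i • σ i) ∨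
           (∃ c : Fin ℓ → ℝ, (∀ i, 0 ≤ c i) ∧ -α = ∑ i, c i • σ i)

/-- `γ` is a Coxeter element of `W`: a product, in some order, of the reflections in
the `ℓ` simple roots of some simple system of the root system `Φ`. -/
def IsCoxeterElement (W : Subgroup (V ≃ₗᵢ[ℝ] V)) (Φ : Set V) (ℓ : ℕ) (γ : W) : Prop :=
  ∃ σ : Fin ℓ → V, IsSimpleSystem Φ σ ∧
    ∃ t : Fin ℓ → W, (∀ i, reflFormula (σ i) (t i).1) ∧
      ∃ l : List (Fin ℓ), l.Nodup ∧ (∀ i, i ∈ l) ∧ (l.map t).prod = γ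

/-- `l` is a maximal (saturated) chain from `u` to `v` in the absolute order. -/
def IsMaximalChain (W : Subgroup (V ≃ₗᵢ[ℝ] V)) (u v : W) (l : List W) : Prop :=
  l.head? = some u ∧ l.getLast? = some v ∧ l.Chain' (covers W)

/-- The label of a chain under the natural edge labeling `λ (x, y) = x⁻¹ * y`. -/
def chainLabels (W : Subgroup (V ≃ₗᵢ[ℝ] V)) (l : List W) : List W :=
  l.zipWith (fun x y => x⁻¹ * y) l.tail

end

noncomputable section AuxProofs

open scoped RealInnerProductSpace

variable {V : Type*} [NormedAddCommGroup V] [InnerProductSpace ℝ V]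

lemma IsReflection.sq {g : V ≃ₗᵢ[ℝ] V} (h : IsReflection g) : g * g = 1 := by
  obtain ⟨α, hα, hg⟩ := h
  have hne : ⟪α, α⟫ ≠ 0 := fun hc => hα (inner_self_eq_zero.mp hc)
  ext v
  have h1 : ⟪α, g v⟫ = -⟪α, v⟫ := by
    rw [hg v, inner_sub_right, real_inner_smul_right]
    field_simp
    ring
  show g (g v) = v
  rw [hg (g v), h1, hg v]
  have h2 : 2 * -⟪α, v⟫ / ⟪α, α⟫ = -(2 * ⟪α, v⟫ / ⟪α, α⟫) := by ring
  rw [h2, neg_smul, sub_neg_eq_add, sub_add_cancel]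

lemma IsReflection.inv_eq {g : V ≃ₗᵢ[ℝ] V} (h : IsReflection g) : g⁻¹ = g :=
  inv_eq_of_mul_eq_one_right h.sq

lemma IsReflection.ne_one {g : V ≃ₗᵢ[ℝ] V} (h : IsReflection g) : g ≠ 1 := by
  obtain ⟨α, hα, hg⟩ := h
  have hne : ⟪α, α⟫ ≠ 0 := fun hc => hα (inner_self_eq_zero.mp hc)
  intro hone
  have : g α = α := by rw [hone]; rfl
  have h2 : 2 * ⟪α, α⟫ / ⟪α, α⟫ = 2 := by field_simp
  rw [hg α, h2] at this
  have h3 : (2 : ℝ) • α = 0 := sub_eq_self.mp this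
  rcases smul_eq_zero.mp h3 with h | h
  · norm_num at h
  · exact hα h

lemma IsReflection.conj {s : V ≃ₗᵢ[ℝ] V} (h : IsReflection s) (g : V ≃ₗᵢ[ℝ] V) :
    IsReflection (g * s * g⁻¹) := by
  obtain ⟨α, hα, hs⟩ := h
  refine ⟨g α, by simpa using hα, fun v => ?_⟩
  have h1 : (g * s * g⁻¹) v = g (s (g⁻¹ v)) := rfl
  rw [h1, hs (g⁻¹ v)]
  have h2 : ⟪α, g⁻¹ v⟫ = ⟪g α, v⟫ := by
    rw [← g.inner_map_map α (g⁻¹ v)]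
    simp
  have h3 : ⟪g α, g α⟫ = ⟪α, α⟫ := g.inner_map_map α α
  rw [map_sub, map_smul, h2, h3]
  simp

variable (W : Subgroup (V ≃ₗᵢ[ℝ] V))

lemma refl_sq' {t : W} (h : IsReflection (t : W).1) : t * t = 1 :=
  Subtype.ext (by simpa using h.sq)

lemma refl_inv' {t : W} (h : IsReflection (t : W).1) : t⁻¹ = t :=
  inv_eq_of_mul_eq_one_right (refl_sq' W h)

lemma refl_ne_one' {t : W} (h : IsReflection (t : W).1) : t ≠ 1 := by
  intro hc
  exact h.ne_one (by rw [hc]; rfl)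

lemma reverse_prod_refl (l : List W) (h : ∀ t ∈ l, IsReflection (t : W).1) :
    l.reverse.prod = (l.prod)⁻¹ := by
  induction l with
  | nil => simp
  | cons t l ih =>
    simp only [List.reverse_cons, List.prod_append, List.prod_cons, List.prod_nil, mul_one]
    rw [ih (fun s hs => h s (List.mem_cons_of_mem _ hs)), mul_inv_rev,
      refl_inv' W (h t (List.mem_cons_self))]

lemma exists_fact (hW : IsReflectionGroup W) (w : W) :
    ∃ l : List W, (∀ t ∈ l, IsReflection (t : W).1) ∧ l.prod = w := by
  have hw : (w : V ≃ₗᵢ[ℝ] V) ∈ Subgroup.closure {g | g ∈ W ∧ IsReflection g} := by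
    rw [hW.2]; exact w.2
  have main : ∀ (x : V ≃ₗᵢ[ℝ] V),
      x ∈ Subgroup.closure {g | g ∈ W ∧ IsReflection g} →
      ∃ l : List W, (∀ t ∈ l, IsReflection (t : W).1) ∧ ((l.prod : W) : V ≃ₗᵢ[ℝ] V) = x := by
    intro x hx
    induction hx using Subgroup.closure_induction with
    | mem x hx => exact ⟨[⟨x, hx.1⟩], by simpa using hx.2, by simp⟩
    | one => exact ⟨[], by simp, by simp⟩
    | mul x y hx hy ihx ihy =>
      obtain ⟨l₁, h1, h2⟩ := ihx
      obtain ⟨l₂, h3, h4⟩ := ihy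
      refine ⟨l₁ ++ l₂, ?_, by rw [List.prod_append, Subgroup.coe_mul, h2, h4]⟩
      intro t ht
      rcases List.mem_append.mp ht with h | h
      · exact h1 t h
      · exact h3 t h
    | inv x hx ihx =>
      obtain ⟨l, h1, h2⟩ := ihx
      refine ⟨l.reverse, fun t ht => h1 t (List.mem_reverse.mp ht), ?_⟩
      rw [reverse_prod_refl W l h1, Subgroup.coe_inv, h2]
  obtain ⟨l, h1, h2⟩ := main w hw
  exact ⟨l, h1, Subtype.ext h2⟩

lemma refLen_le {w : W} {l : List W} (h1 : ∀ t ∈ l, IsReflection (t : W).1)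
    (h2 : l.prod = w) : refLen W w ≤ l.length :=
  Nat.sInf_le ⟨l, rfl, h1, h2⟩

lemma refLen_spec (hW : IsReflectionGroup W) (w : W) :
    ∃ l : List W, l.length = refLen W w ∧ (∀ t ∈ l, IsReflection (t : W).1) ∧ l.prod = w := by
  obtain ⟨l, h1, h2⟩ := exists_fact W hW w
  have hne : {k | ∃ l : List W, l.length = k ∧ (∀ t ∈ l, IsReflection (t : W).1) ∧
      l.prod = w}.Nonempty := ⟨l.length, l, rfl, h1, h2⟩
  exact Nat.sInf_mem hne

lemma refLen_mul_le (hW : IsReflectionGroup W) (a b : W) :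
    refLen W (a * b) ≤ refLen W a + refLen W b := by
  obtain ⟨la, ha1, ha2, ha3⟩ := refLen_spec W hW a
  obtain ⟨lb, hb1, hb2, hb3⟩ := refLen_spec W hW b
  calc refLen W (a * b) ≤ (la ++ lb).length := by
        refine refLen_le W ?_ (by rw [List.prod_append, ha3, hb3])
        intro t ht
        rcases List.mem_append.mp ht with h | h
        · exact ha2 t h
        · exact hb2 t h
    _ = refLen W a + refLen W b := by rw [List.length_append, ha1, hb1]

lemma refLen_one : refLen W 1 = 0 :=
  Nat.le_zero.mp (refLen_le W (l := []) (by simp) (by simp))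

lemma eq_one_of_refLen_zero (hW : IsReflectionGroup W) {w : W} (h : refLen W w = 0) : w = 1 := by
  obtain ⟨l, h1, _, h3⟩ := refLen_spec W hW w
  rw [h] at h1
  rw [List.length_eq_zero_iff] at h1
  rw [h1] at h3
  simpa using h3.symm

lemma refLen_reflection (hW : IsReflectionGroup W) {t : W} (h : IsReflection (t : W).1) :
    refLen W t = 1 := by
  have h1 : refLen W t ≤ 1 := refLen_le W (l := [t]) (by simpa using h) (by simp)
  have h2 : refLen W t ≠ 0 := fun hc => refl_ne_one' W h (eq_one_of_refLen_zero W hW hc)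
  omega

lemma covers_label (hW : IsReflectionGroup W) {x y : W} (h : covers W x y) :
    IsReflection ((x⁻¹ * y : W) : V ≃ₗᵢ[ℝ] V) ∧ refLen W y = refLen W x + 1 := by
  obtain ⟨habs, hne, hmax⟩ := h
  have habs' : refLen W x + refLen W (x⁻¹ * y) = refLen W y := habs
  have hk0 : refLen W (x⁻¹ * y) ≠ 0 := by
    intro hc
    have h1 : x⁻¹ * y = 1 := eq_one_of_refLen_zero W hW hc
    exact hne (inv_mul_eq_one.mp h1)
  obtain ⟨l, hlen, hrefl, hprod⟩ := refLen_spec W hW (x⁻¹ * y)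
  match l, hlen, hrefl, hprod with
  | [], hlen, _, _ => exact absurd hlen.symm hk0
  | t :: rest, hlen, hrefl, hprod =>
    have ht : IsReflection (t : W).1 := hrefl t (List.mem_cons_self)
    by_cases hk : refLen W (x⁻¹ * y) = 1
    · have hrest : rest = [] := by
        have := hlen
        simp only [List.length_cons, hk] at this
        exact List.length_eq_zero_iff.mp (by omega)
      have : x⁻¹ * y = t := by
        rw [← hprod, hrest]; simp
      rw [this]
      exact ⟨ht, by omega⟩
    · exfalso
      set z := x * t with hz
      have hzx : x⁻¹ * z = t := by rw [hz]; group
      have hzy : z⁻¹ * y = rest.prod := by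
        have h1 : t * rest.prod = x⁻¹ * y := by simpa using hprod
        rw [hz, mul_inv_rev, mul_assoc, ← h1, refl_inv' W ht, ← mul_assoc,
          refl_sq' W ht, one_mul]
      have hrestlen : rest.length + 1 = refLen W (x⁻¹ * y) := by simpa using hlen
      have h_zy_le : refLen W (z⁻¹ * y) ≤ refLen W (x⁻¹ * y) - 1 := by
        have := refLen_le W (fun s hs => hrefl s (List.mem_cons_of_mem _ hs)) hzy.symm
        omega
      have h_z_le : refLen W z ≤ refLen W x + 1 := by
        have := refLen_mul_le W hW x t
        rw [refLen_reflection W hW ht] at this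
        exact this
      have h_y_le : refLen W y ≤ refLen W z + refLen W (z⁻¹ * y) := by
        have := refLen_mul_le W hW z (z⁻¹ * y)
        rwa [mul_inv_cancel_left] at this
      have e1 : refLen W z = refLen W x + 1 := by omega
      have e2 : refLen W (z⁻¹ * y) = refLen W (x⁻¹ * y) - 1 := by omega
      have haxz : absLe W x z := by
        show refLen W x + refLen W (x⁻¹ * z) = refLen W z
        rw [hzx, refLen_reflection W hW ht, e1]
      have hazy : absLe W z y := by
        show refLen W z + refLen W (z⁻¹ * y) = refLen W y
        omega
      rcases hmax z haxz hazy with hc | hc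
      · have : t = 1 := by
          rw [hz] at hc
          exact mul_left_cancel (a := x) (by rw [hc, mul_one])
        exact refl_ne_one' W ht this
      · rw [hc] at e2
        simp only [inv_mul_cancel, refLen_one W] at e2
        omega

lemma nodup_reduced (hW : IsReflectionGroup W) :
    ∀ L : List W, (∀ t ∈ L, IsReflection (t : W).1) → refLen W L.prod = L.length → L.Nodup := by
  intro L
  induction L with
  | nil => simp
  | cons t L ih =>
    intro hrefl hlen
    have ht : IsReflection (t : W).1 := hrefl t (List.mem_cons_self)
    have hreflL : ∀ s ∈ L, IsReflection (s : W).1 :=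
      fun s hs => hrefl s (List.mem_cons_of_mem _ hs)
    have hLle : refLen W L.prod ≤ L.length := refLen_le W hreflL rfl
    have hmul : refLen W (t :: L).prod ≤ 1 + refLen W L.prod := by
      rw [List.prod_cons]
      have := refLen_mul_le W hW t L.prod
      rw [refLen_reflection W hW ht] at this
      exact this
    have hlen' : refLen W (t :: L).prod = L.length + 1 := by simpa using hlen
    have hLeq : refLen W L.prod = L.length := by omega
    rw [List.nodup_cons]
    constructor
    · intro htL
      obtain ⟨B, C, hBC⟩ := List.append_of_mem htL
      set l' := B.map (fun s => t * s * t⁻¹) ++ C with hl'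
      have hprod' : l'.prod = (t :: L).prod := by
        have hconj : (B.map (fun s => t * s * t⁻¹)).prod = t * B.prod * t⁻¹ := by
          have := map_list_prod (MulAut.conj t) B
          have hf : (⇑(MulAut.conj t)) = fun s => t * s * t⁻¹ :=
            funext fun s => MulAut.conj_apply t s
          rw [hf] at this
          exact this.symm
        rw [hl', List.prod_append, hconj, List.prod_cons, hBC, List.prod_append,
          List.prod_cons, refl_inv' W ht]
        simp [mul_assoc]
      have hrefl' : ∀ s ∈ l', IsReflection (s : W).1 := by
        intro s hs
        rcases List.mem_append.mp hs with hmem | hmem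
        · obtain ⟨b, hb, rfl⟩ := List.mem_map.mp hmem
          have hb' : IsReflection (b : W).1 := hreflL b (hBC ▸ List.mem_append.mpr
            (Or.inl hb))
          simpa using hb'.conj (t : W).1
        · exact hreflL s (hBC ▸ List.mem_append.mpr (Or.inr (List.mem_cons_of_mem _ hmem)))
      have hlelen : refLen W (t :: L).prod ≤ l'.length := refLen_le W hrefl' hprod'
      have hLlen : L.length = B.length + C.length + 1 := by
        rw [hBC, List.length_append, List.length_cons]
        omega
      have hl'len : l'.length = B.length + C.length := by simp [hl']
      omega
    · exact ih hreflL hLeq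

lemma chain_facts (hW : IsReflectionGroup W) :
    ∀ (l : List W) (x : W), (x :: l).Chain' (covers W) →
      (∀ t ∈ chainLabels W (x :: l), IsReflection (t : W).1) ∧
      (chainLabels W (x :: l)).prod = x⁻¹ * (x :: l).getLast (List.cons_ne_nil _ _) ∧
      refLen W ((x :: l).getLast (List.cons_ne_nil _ _)) =
        refLen W x + (chainLabels W (x :: l)).length := by
  intro l
  induction l with
  | nil =>
    intro x _
    refine ⟨by simp [chainLabels], ?_, by simp [chainLabels]⟩
    simp [chainLabels]
  | cons y l ih =>
    intro x hc
    simp only [List.Chain', List.isChain_cons_cons] at hc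
    obtain ⟨hxy, hc'⟩ := hc
    obtain ⟨ih1, ih2, ih3⟩ := ih y hc'
    obtain ⟨hlab, hstep⟩ := covers_label W hW hxy
    have hcl : chainLabels W (x :: y :: l) = (x⁻¹ * y) :: chainLabels W (y :: l) := rfl
    have hgl : (x :: y :: l).getLast (List.cons_ne_nil _ _) =
        (y :: l).getLast (List.cons_ne_nil _ _) := List.getLast_cons (List.cons_ne_nil _ _)
    refine ⟨?_, ?_, ?_⟩
    · intro t ht
      rw [hcl] at ht
      rcases List.mem_cons.mp ht with rfl | hmem
      · exact hlab
      · exact ih1 t hmem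
    · rw [hcl, List.prod_cons, ih2, hgl, ← mul_assoc, mul_assoc x⁻¹ y y⁻¹,
        mul_inv_cancel, mul_one]
    · rw [hcl, hgl, ih3, hstep, List.length_cons]
      omega

end AuxProofs


/-- The reflections appearing as coordinates of the label of a single maximal chain
of an interval `[u, v]` of `NC_W(γ)` under the natural edge labeling are pairwise
distinct. -/
theorem statement8 {V : Type*} [NormedAddCommGroup V] [InnerProductSpace ℝ V]
    [FiniteDimensional ℝ V]
    (W : Subgroup (V ≃ₗᵢ[ℝ] V)) (hW : IsReflectionGroup W)
    (Φ : Set V) (hΦ : IsRootSystemFor W Φ)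
    (γ : W) (hγ : IsCoxeterElement W Φ (Module.finrank ℝ V) γ)
    (u v : W) (huv : absLe W u v) (hvγ : absLe W v γ)
    (l : List W) (hl : IsMaximalChain W u v l) :
    (chainLabels W l).Nodup := by
  obtain ⟨hhead, hlast, hchain⟩ := hl
  match l, hhead with
  | x :: l', hhead =>
    have hx : x = u := by simpa using hhead
    subst hx
    have hv : (x :: l').getLast (List.cons_ne_nil _ _) = v := by
      rw [List.getLast?_eq_getLast (List.cons_ne_nil _ _)] at hlast
      simpa using hlast
    obtain ⟨hrefl, hprod, hlen⟩ := chain_facts W hW l' x hchain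
    rw [hv] at hprod hlen
    have h1 : refLen W (x⁻¹ * v) ≤ (chainLabels W (x :: l')).length :=
      refLen_le W hrefl hprod
    have h2 : refLen W v ≤ refLen W x + refLen W (x⁻¹ * v) := by
      have := refLen_mul_le W hW x (x⁻¹ * v)
      rwa [mul_inv_cancel_left] at this
    have h3 : refLen W (chainLabels W (x :: l')).prod = (chainLabels W (x :: l')).length := by
      rw [hprod]; omega
    exact nodup_reduced W hW _ hrefl h3
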